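/- Let L be a Hitomezashi loop, let a be the minimum x-coordinate of its vertices, and orient L so that all its edges on the line x = a point in the negative y-direction. If y_0 > y_1, ..., y_{t−1} are the starting y-coordinates of the edges of L on the line x = a where y_0 is the largest, listed in the order they are traversed, then y_0 > y_1 > ... > y_{t−1}. -/

import Mathlib

namespace HitoAux


abbrev Z2 := ℤ × ℤ
abbrev Dt := Z2 × Z2

/-- `L` is a chain of darts from `u` to `w`. -/
def IsChainD : Z2 → List Dt → Z2 → Prop
  | u, [], w => u = w
  | u, d :: L, w => d.1 = u ∧ IsChainD d.2 L w

lemma chainD_append {u w : Z2} {L1 L2 : List Dt} :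
    IsChainD u (L1 ++ L2) w ↔ ∃ z, IsChainD u L1 z ∧ IsChainD z L2 w := by
  induction L1 generalizing u with
  | nil =>
    constructor
    · intro h; exact ⟨u, rfl, h⟩
    · rintro ⟨z, rfl, h⟩; exact h
  | cons d L ih =>
    constructor
    · rintro ⟨hd, h⟩
      obtain ⟨z, h1, h2⟩ := ih.mp h
      exact ⟨z, ⟨hd, h1⟩, h2⟩
    · rintro ⟨z, ⟨hd, h1⟩, h2⟩
      exact ⟨hd, ih.mpr ⟨z, h1, h2⟩⟩

/-- fst of any dart in a chain is the start or some dart's snd. -/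
lemma chainD_fst_mem {u w : Z2} {L : List Dt} (h : IsChainD u L w) :
    ∀ d ∈ L, d.1 = u ∨ d.1 ∈ L.map (·.2) := by
  induction L generalizing u with
  | nil => simp
  | cons e L ih =>
    obtain ⟨he, hL⟩ := h
    intro d hd
    rcases List.mem_cons.mp hd with rfl | hd'
    · left; exact he
    · rcases ih hL d hd' with h' | h'
      · right; simp [h']
      · right; simp [h']

lemma chainD_end_mem {u w : Z2} {L : List Dt} (h : IsChainD u L w) :
    w = u ∨ w ∈ L.map (·.2) := by
  induction L generalizing u with
  | nil => left; exact h.symm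
  | cons e L ih =>
    obtain ⟨he, hL⟩ := h
    rcases ih hL with h' | h'
    · right; simp [h']
    · right; simp [h']

def UnitStep (d : Dt) : Prop :=
  d.2 = (d.1.1 + 1, d.1.2) ∨ d.2 = (d.1.1 - 1, d.1.2) ∨
  d.2 = (d.1.1, d.1.2 + 1) ∨ d.2 = (d.1.1, d.1.2 - 1)

/-- Balance: in a chain, outgoing minus incoming crossings of `S` is determined by endpoints. -/
lemma balance (S : Z2 → Bool) : ∀ (L : List Dt) (u w : Z2), IsChainD u L w →
    L.countP (fun d => S d.1 && !S d.2) + (if S w then 1 else 0)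
      = L.countP (fun d => !S d.1 && S d.2) + (if S u then 1 else 0) := by
  intro L
  induction L with
  | nil => rintro u w rfl; rfl
  | cons d L ih =>
    rintro u w ⟨rfl, hL⟩
    have H := ih d.2 w hL
    simp only [List.countP_cons]
    cases h1 : S d.1 <;> cases h2 : S d.2 <;>
      (try simp [h1, h2] at H ⊢) <;> omega

/-- Split a count over a disjoint union of two predicates. -/
lemma countP_split (r p q : Dt → Bool) (L : List Dt)
    (h : ∀ d ∈ L, (r d = true ↔ (p d = true ∨ q d = true)) ∧ ¬(p d = true ∧ q d = true)) :
    L.countP r = L.countP p + L.countP q := by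
  induction L with
  | nil => rfl
  | cons d L ih =>
    simp only [List.countP_cons]
    obtain ⟨hiff, hdisj⟩ := h d (by simp)
    have := ih (fun e he => h e (by simp [he]))
    cases hp : p d <;> cases hq : q d <;> cases hr : r d <;>
      simp [hp, hq, hr] at hiff hdisj ⊢ <;> omega

def Sb (x m : ℤ) (z : Z2) : Bool := decide (z.2 = m + 1 ∧ z.1 ≤ x)

/-- dart crosses the level between `m` and `m+1` at column `≤ x`. -/
def crossB (x m : ℤ) (d : Dt) : Bool :=
  decide (d.1.1 = d.2.1 ∧ d.1.1 ≤ x ∧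
    ((d.1.2 = m ∧ d.2.2 = m + 1) ∨ (d.2.2 = m ∧ d.1.2 = m + 1)))

/-- dart lies on the vertical edge from `(c,m)` to `(c,m+1)`. -/
def onVB (c m : ℤ) (d : Dt) : Bool :=
  decide (d.1.1 = c ∧ d.2.1 = c ∧
    ((d.1.2 = m ∧ d.2.2 = m + 1) ∨ (d.2.2 = m ∧ d.1.2 = m + 1)))

/-- dart lies on the horizontal edge from `(x,h)` to `(x+1,h)`. -/
def onHB (x h : ℤ) (d : Dt) : Bool :=
  decide (d.1.2 = h ∧ d.2.2 = h ∧ ((d.1.1 = x ∧ d.2.1 = x + 1) ∨ (d.2.1 = x ∧ d.1.1 = x + 1)))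

lemma Hstep (L : List Dt) (x m : ℤ) :
    L.countP (crossB (x+1) m) = L.countP (crossB x m) + L.countP (onVB (x+1) m) := by
  apply countP_split
  rintro ⟨⟨c, h⟩, ⟨c', h'⟩⟩ _
  constructor
  · simp only [crossB, onVB, decide_eq_true_eq]; omega
  · simp only [crossB, onVB, decide_eq_true_eq]; omega

lemma Vstep (L : List Dt) (u : Z2) (hc : IsChainD u L u) (hu : ∀ d ∈ L, UnitStep d) (x m : ℤ) :
    (L.countP (crossB x m) + L.countP (crossB x (m+1)) + L.countP (onHB x (m+1))) % 2 = 0 := by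
  have hbal := balance (Sb x m) L u u hc
  have e1 : L.countP (fun d => (Sb x m d.1 && !Sb x m d.2) || (!Sb x m d.1 && Sb x m d.2))
      = L.countP (fun d => Sb x m d.1 && !Sb x m d.2)
        + L.countP (fun d => !Sb x m d.1 && Sb x m d.2) := by
    apply countP_split
    intro d _
    constructor
    · exact iff_of_eq (Bool.or_eq_true _ _)
    · cases h1 : Sb x m d.1 <;> cases h2 : Sb x m d.2 <;> simp [h1, h2]
  have e2 : L.countP (fun d => (Sb x m d.1 && !Sb x m d.2) || (!Sb x m d.1 && Sb x m d.2))
      = L.countP (crossB x m)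
        + L.countP (fun d => crossB x (m+1) d || onHB x (m+1) d) := by
    apply countP_split
    clear hbal e1 hc
    intro d hd
    obtain ⟨⟨c, h⟩, ⟨c', h'⟩⟩ := d
    have hud := hu _ hd
    simp only [UnitStep, Prod.mk.injEq] at hud
    constructor <;>
      (simp only [Sb, crossB, onHB, Bool.or_eq_true, Bool.and_eq_true, Bool.not_eq_true',
        decide_eq_true_eq, decide_eq_false_iff_not]
       omega)
  have e3 : L.countP (fun d => crossB x (m+1) d || onHB x (m+1) d)
      = L.countP (crossB x (m+1)) + L.countP (onHB x (m+1)) := by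
    apply countP_split
    rintro ⟨⟨c, h⟩, ⟨c', h'⟩⟩ _
    constructor
    · exact iff_of_eq (Bool.or_eq_true _ _)
    · simp only [crossB, onHB, decide_eq_true_eq]; omega
  omega


-- PART2
/-- parity of the number of darts of `J` crossed by the leftward ray out of the
dual point `z + (-1/2, 1/2)`. -/
def wpar (J : List Dt) (z : Z2) : ℕ := (J.countP (crossB (z.1 - 1) z.2)) % 2

lemma countP_zero_of_touch (J : List Dt) (v1 v2 : Z2)
    (hnot : ∀ d ∈ J, d.1 ≠ v1 ∧ d.1 ≠ v2 ∧ d.2 ≠ v1 ∧ d.2 ≠ v2)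
    (P : Dt → Bool)
    (hP : ∀ dd : Dt, P dd = true → dd.1 = v1 ∨ dd.1 = v2 ∨ dd.2 = v1 ∨ dd.2 = v2) :
    J.countP P = 0 := by
  rw [List.countP_eq_zero]
  intro d hd hPd
  have h4 := hnot d hd
  rcases hP d hPd with h5 | h5 | h5 | h5 <;> tauto

lemma shadow_step (J : List Dt) (uJ : Z2) (hcJ : IsChainD uJ J uJ) (huJ : ∀ d ∈ J, UnitStep d)
    (e : Dt) (he : UnitStep e)
    (hnot : ∀ d ∈ J, d.1 ≠ e.1 ∧ d.1 ≠ e.2 ∧ d.2 ≠ e.1 ∧ d.2 ≠ e.2) :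
    wpar J e.1 = wpar J e.2 := by
  obtain ⟨⟨c, h⟩, e2⟩ := e
  simp only [UnitStep] at he
  dsimp only at he hnot ⊢
  rcases he with rfl | rfl | rfl | rfl
  · -- right move
    have h1 := Hstep J (c - 1) h
    rw [show c - 1 + 1 = c by ring] at h1
    have h3 : J.countP (onVB c h) = 0 := by
      apply countP_zero_of_touch J (c, h) (c + 1, h) hnot
      rintro ⟨⟨p, q⟩, ⟨p', q'⟩⟩ hPd
      simp only [onVB, decide_eq_true_eq] at hPd
      simp only [Prod.mk.injEq]
      omega
    simp only [wpar]
    rw [show c + 1 - 1 = c by ring]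
    omega
  · -- left move
    have h1 := Hstep J (c - 2) h
    rw [show c - 2 + 1 = c - 1 by ring] at h1
    have h3 : J.countP (onVB (c - 1) h) = 0 := by
      apply countP_zero_of_touch J (c, h) (c - 1, h) hnot
      rintro ⟨⟨p, q⟩, ⟨p', q'⟩⟩ hPd
      simp only [onVB, decide_eq_true_eq] at hPd
      simp only [Prod.mk.injEq]
      omega
    simp only [wpar]
    rw [show c - 1 - 1 = c - 2 by ring]
    omega
  · -- up move
    have h1 := Vstep J uJ hcJ huJ (c - 1) h
    have h3 : J.countP (onHB (c - 1) (h + 1)) = 0 := by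
      apply countP_zero_of_touch J (c, h) (c, h + 1) hnot
      rintro ⟨⟨p, q⟩, ⟨p', q'⟩⟩ hPd
      simp only [onHB, decide_eq_true_eq] at hPd
      simp only [Prod.mk.injEq]
      omega
    simp only [wpar]
    omega
  · -- down move
    have h1 := Vstep J uJ hcJ huJ (c - 1) (h - 1)
    rw [show h - 1 + 1 = h by ring] at h1
    have h3 : J.countP (onHB (c - 1) h) = 0 := by
      apply countP_zero_of_touch J (c, h) (c, h - 1) hnot
      rintro ⟨⟨p, q⟩, ⟨p', q'⟩⟩ hPd
      simp only [onHB, decide_eq_true_eq] at hPd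
      simp only [Prod.mk.injEq]
      omega
    simp only [wpar]
    omega

lemma shadow_walk (J : List Dt) (uJ : Z2) (hcJ : IsChainD uJ J uJ)
    (huJ : ∀ d ∈ J, UnitStep d) :
    ∀ (B : List Dt) (u w : Z2), IsChainD u B w → (∀ e ∈ B, UnitStep e) →
      (∀ d ∈ J, ∀ e ∈ B, d.1 ≠ e.1 ∧ d.1 ≠ e.2 ∧ d.2 ≠ e.1 ∧ d.2 ≠ e.2) →
      wpar J u = wpar J w := by
  intro B
  induction B with
  | nil => rintro u w rfl _ _; rfl
  | cons e B ih =>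
    rintro u w ⟨rfl, hB⟩ hu hdisj
    have h1 := shadow_step J uJ hcJ huJ e (hu e (by simp))
      (fun d hd => hdisj d hd e (by simp))
    exact h1.trans (ih e.2 w hB (fun x hx => hu x (by simp [hx]))
      (fun d hd x hx => hdisj d hd x (by simp [hx])))

def vpath (c : ℤ) : ℤ → ℕ → List Dt
  | _, 0 => []
  | u, s+1 => ((c,u),(c,u+1)) :: vpath c (u+1) s

lemma vpath_chain (c : ℤ) (s : ℕ) : ∀ u : ℤ, IsChainD (c,u) (vpath c u s) (c, u + s) := by
  induction s with
  | zero => intro u; simp [vpath, IsChainD]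
  | succ s ih =>
    intro u
    refine ⟨rfl, ?_⟩
    have h3 : u + ((s:ℤ) + 1) = (u + 1) + s := by ring
    have h2 : ((s+1 : ℕ) : ℤ) = (s:ℤ) + 1 := by push_cast; ring
    rw [h2, h3]
    exact ih (u+1)

lemma vpath_unit (c : ℤ) (s : ℕ) : ∀ u : ℤ, ∀ d ∈ vpath c u s, UnitStep d := by
  induction s with
  | zero => intro u d hd; simp [vpath] at hd
  | succ s ih =>
    intro u d hd
    rcases List.mem_cons.mp hd with rfl | hd'
    · right; right; left; rfl
    · exact ih (u+1) d hd'

lemma vpath_cols (c : ℤ) (s : ℕ) : ∀ u : ℤ, ∀ d ∈ vpath c u s, d.1.1 = c ∧ d.2.1 = c := by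
  induction s with
  | zero => intro u d hd; simp [vpath] at hd
  | succ s ih =>
    intro u d hd
    rcases List.mem_cons.mp hd with rfl | hd'
    · exact ⟨rfl, rfl⟩
    · exact ih (u+1) d hd'

lemma vpath_count (x m c : ℤ) (s : ℕ) : ∀ u : ℤ,
    (vpath c u s).countP (crossB x m) = if c ≤ x ∧ u ≤ m ∧ m + 1 ≤ u + s then 1 else 0 := by
  induction s with
  | zero =>
    intro u
    simp only [vpath, List.countP_nil]
    symm
    rw [if_neg]
    omega
  | succ s ih =>
    intro u
    simp only [vpath, List.countP_cons, ih (u+1), crossB, decide_eq_true_eq, true_and,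
      and_true]
    split_ifs <;> omega


-- PART 3
lemma geom (a : ℤ) (v : Z2) (D1 D2 E1 E2 : List Dt) (dk dk1 dj : Dt)
    (hchain : IsChainD v (D1 ++ dk :: (D2 ++ dk1 :: (E1 ++ dj :: E2))) v)
    (hnodup : ((D1 ++ dk :: (D2 ++ dk1 :: (E1 ++ dj :: E2))).map (·.2)).Nodup)
    (hunit : ∀ d ∈ D1 ++ dk :: (D2 ++ dk1 :: (E1 ++ dj :: E2)), UnitStep d)
    (hx : ∀ d ∈ D1 ++ dk :: (D2 ++ dk1 :: (E1 ++ dj :: E2)), a ≤ d.1.1 ∧ a ≤ d.2.1)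
    (y β yj : ℤ)
    (hk2 : dk.2 = (a, y - 1))
    (hk11 : dk1.1 = (a, β)) (hk12 : dk1.2 = (a, β - 1))
    (hj : dj.1 = (a, yj))
    (hlt : β < y) (hlt2 : β < yj) (hlt3 : yj ≤ y - 2) :
    False := by
  set D : List Dt := D1 ++ dk :: (D2 ++ dk1 :: (E1 ++ dj :: E2)) with hD
  set s : ℕ := (y - 1 - β).toNat with hs
  have hsval : (s : ℤ) = y - 1 - β := Int.toNat_of_nonneg (by omega)
  -- decompose the chain
  obtain ⟨z0, hD1c, hz0⟩ := chainD_append.mp hchain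
  obtain ⟨hdk1eq, hrest⟩ := hz0
  obtain ⟨z1, hAc, hz1⟩ := chainD_append.mp hrest
  obtain ⟨hdk1eq', hrest2⟩ := hz1
  obtain ⟨z2, hBc, hz2⟩ := chainD_append.mp hrest2
  obtain ⟨hdjeq, _⟩ := hz2
  -- hAc : IsChainD dk.2 D2 z1 with z1 = dk1.1 ; hBc : IsChainD dk1.2 E1 z2 with z2 = dj.1
  rw [← hdk1eq'] at hAc
  rw [← hdjeq] at hBc
  -- the closed curve J
  set c1 : Dt := ((a, β), (a - 1, β)) with hc1
  set c2 : Dt := ((a - 1, y - 1), (a, y - 1)) with hc2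
  set J : List Dt := D2 ++ (c1 :: (vpath (a-1) β s ++ [c2])) with hJ
  have hvend : β + (s : ℤ) = y - 1 := by omega
  have hJchain : IsChainD (a, y - 1) J (a, y - 1) := by
    rw [hJ]
    apply chainD_append.mpr
    refine ⟨dk1.1, ?_, ?_⟩
    · rw [← hk2]; exact hAc
    · refine ⟨by rw [hk11], ?_⟩
      apply chainD_append.mpr
      refine ⟨(a - 1, β + s), ?_, ?_⟩
      · exact vpath_chain (a-1) s β
      · rw [hvend]
        exact ⟨rfl, rfl⟩
  have hJunit : ∀ d ∈ J, UnitStep d := by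
    intro d hd
    rw [hJ] at hd
    rcases List.mem_append.mp hd with hd | hd
    · exact hunit d (by rw [hD]; simp [hd])
    · rcases List.mem_cons.mp hd with rfl | hd
      · right; left; rfl
      · rcases List.mem_append.mp hd with hd | hd
        · exact vpath_unit (a-1) s β d hd
        · rcases List.mem_cons.mp hd with rfl | hd
          · rw [hc2]; left; norm_num
          · simp at hd
  -- endpoints of J
  have hJend : ∀ d ∈ J, (d.1 ∈ dk.2 :: D2.map (·.2) ∨ d.1.1 = a - 1) ∧
      (d.2 ∈ dk.2 :: D2.map (·.2) ∨ d.2.1 = a - 1) := by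
    have hdk1mem : dk1.1 ∈ dk.2 :: D2.map (·.2) := by
      rcases chainD_end_mem hAc with h | h
      · simp [h]
      · simp [h]
    intro d hd
    rw [hJ] at hd
    rcases List.mem_append.mp hd with hd | hd
    · constructor
      · rcases chainD_fst_mem hAc d hd with h | h
        · left; simp [h]
        · left; simp [h]
      · left; exact List.mem_cons_of_mem _ (List.mem_map_of_mem hd)
    · rcases List.mem_cons.mp hd with rfl | hd
      · constructor
        · left; rw [hc1]; rw [← hk11]; exact hdk1mem
        · right; rfl
      · rcases List.mem_append.mp hd with hd | hd
        · have := vpath_cols (a-1) s β d hd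
          exact ⟨Or.inr this.1, Or.inr this.2⟩
        · rcases List.mem_cons.mp hd with rfl | hd
          · exact ⟨Or.inr rfl, Or.inl (by rw [hc2, ← hk2]; simp)⟩
          · simp at hd
  -- endpoints of E1 (plus dj.1)
  have hEend : ∀ e ∈ E1, (e.1 ∈ dk1.2 :: E1.map (·.2)) ∧ (e.2 ∈ dk1.2 :: E1.map (·.2)) := by
    intro e he
    constructor
    · rcases chainD_fst_mem hBc e he with h | h
      · simp [h]
      · simp [h]
    · exact List.mem_cons_of_mem _ (List.mem_map_of_mem he)
  -- disjointness via nodup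
  have hnodup' : ((dk.2 :: D2.map (·.2)) ++ ((dk1.2 :: E1.map (·.2)) ++ (dj.2 :: E2.map (·.2)))).Nodup := by
    have h0 : (D.map (·.2)) = (D1.map (·.2)) ++ ((dk.2 :: D2.map (·.2)) ++ ((dk1.2 :: E1.map (·.2)) ++ (dj.2 :: E2.map (·.2)))) := by
      rw [hD]; simp
    rw [h0] at hnodup
    exact hnodup.of_append_right
  have hdisjXY : ∀ z ∈ dk.2 :: D2.map (·.2), z ∉ dk1.2 :: E1.map (·.2) := by
    intro z hz hz'
    apply (List.disjoint_of_nodup_append hnodup') hz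
    rcases List.mem_cons.mp hz' with h | h
    · simp [h]
    · simp [h]
  have hEcol : ∀ z ∈ dk1.2 :: E1.map (·.2), a ≤ z.1 := by
    intro z hz
    rcases List.mem_cons.mp hz with rfl | hz
    · rw [hk12]
    · obtain ⟨e, he, rfl⟩ := List.mem_map.mp hz
      exact (hx e (by rw [hD]; simp [he])).2
  -- apply shadow walk
  have hdisj : ∀ d ∈ J, ∀ e ∈ E1, d.1 ≠ e.1 ∧ d.1 ≠ e.2 ∧ d.2 ≠ e.1 ∧ d.2 ≠ e.2 := by
    intro d hd e he
    obtain ⟨hd1, hd2⟩ := hJend d hd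
    obtain ⟨he1, he2⟩ := hEend e he
    have key : ∀ zd : Z2, (zd ∈ dk.2 :: D2.map (·.2) ∨ zd.1 = a - 1) →
        ∀ ze : Z2, ze ∈ dk1.2 :: E1.map (·.2) → zd ≠ ze := by
      rintro zd (hzd | hzd) ze hze heq
      · exact hdisjXY zd hzd (heq ▸ hze)
      · have := hEcol ze hze
        rw [heq] at hzd
        omega
    exact ⟨key _ hd1 _ he1, key _ hd1 _ he2, key _ hd2 _ he1, key _ hd2 _ he2⟩
  have hwalk := shadow_walk J (a, y - 1) hJchain hJunit E1 dk1.2 dj.1 hBc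
    (fun e he => hunit e (by rw [hD]; simp [he])) hdisj
  -- compute the two parities
  have hcount : ∀ m : ℤ, J.countP (crossB (a - 1) m)
      = if β ≤ m ∧ m + 1 ≤ y - 1 then 1 else 0 := by
    intro m
    rw [hJ, List.countP_append, List.countP_cons, List.countP_append, List.countP_cons,
      List.countP_nil]
    have h1 : D2.countP (crossB (a-1) m) = 0 := by
      rw [List.countP_eq_zero]
      intro d hd hPd
      simp only [crossB, decide_eq_true_eq] at hPd
      have := hx d (by rw [hD]; simp [hd])
      omega
    have h2 : crossB (a-1) m c1 = false := by
      simp only [crossB, hc1, decide_eq_false_iff_not]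
      omega
    have h3 : crossB (a-1) m c2 = false := by
      simp only [crossB, hc2, decide_eq_false_iff_not]
      omega
    rw [h1, h2, h3, vpath_count]
    norm_num
    split_ifs with hA hB hB <;> omega
  have hw1 : wpar J dk1.2 = 0 := by
    rw [hk12]
    simp only [wpar]
    rw [hcount (β - 1)]
    rw [if_neg (by omega)]
  have hw2 : wpar J dj.1 = 1 := by
    rw [hj]
    simp only [wpar]
    rw [hcount yj]
    rw [if_pos (by omega)]
  rw [hwalk, hw2] at hw1
  exact absurd hw1 one_ne_zero


lemma filter_split {α : Type*} (P : α → Bool) : ∀ (L : List α) (x : α) (r : List α),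
    L.filter P = x :: r → ∃ L1 L2, L = L1 ++ x :: L2 ∧ L2.filter P = r := by
  intro L
  induction L with
  | nil => intro x r h; simp at h
  | cons d L ih =>
    intro x r h
    by_cases hP : P d
    · rw [List.filter_cons_of_pos hP] at h
      obtain ⟨rfl, h2⟩ := List.cons_eq_cons.mp h
      exact ⟨[], L, rfl, h2⟩
    · rw [List.filter_cons_of_neg hP] at h
      obtain ⟨L1, L2, rfl, h2⟩ := ih x r h
      exact ⟨d :: L1, L2, rfl, h2⟩

lemma filter_split2 {α : Type*} (P : α → Bool) : ∀ (l1 : List α) (L : List α) (r : List α),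
    L.filter P = l1 ++ r → ∃ L1 L2, L = L1 ++ L2 ∧ L2.filter P = r := by
  intro l1
  induction l1 with
  | nil => intro L r h; exact ⟨[], L, rfl, h⟩
  | cons x l1 ih =>
    intro L r h
    obtain ⟨A, B, rfl, hB⟩ := filter_split P L x (l1 ++ r) h
    obtain ⟨B1, B2, rfl, h2⟩ := ih B r hB
    exact ⟨A ++ x :: B1, B2, by simp, h2⟩

lemma walk_chainD {G : SimpleGraph (ℤ × ℤ)} {u w : ℤ × ℤ} (q : G.Walk u w) :
    IsChainD u (q.darts.map (fun d => d.toProd)) w := by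
  induction q with
  | nil => rfl
  | cons h q ih => exact ⟨rfl, ih⟩

end HitoAux

/-- The Hitomezashi pattern determined by sequences `ε η : ℤ → ZMod 2`:
horizontal edges `{(i,j),(i+1,j)}` when `i ≡ η j (mod 2)` and
vertical edges `{(i,j),(i,j+1)}` when `j ≡ ε i (mod 2)`. -/
def Hitomezashi (ε η : ℤ → ZMod 2) : SimpleGraph (ℤ × ℤ) :=
  SimpleGraph.fromRel (fun v w =>
    (w = (v.1 + 1, v.2) ∧ (v.1 : ZMod 2) = η v.2) ∨
    (w = (v.1, v.2 + 1) ∧ (v.2 : ZMod 2) = ε v.1))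

/-- If a Hitomezashi loop with minimum x-coordinate `a` is oriented so that its edges
on `x = a` point downward, and the starting y-coordinate of the first traversed such
edge is the largest, then the starting y-coordinates are strictly decreasing in
traversal order. -/
theorem hitomezashi_loop_decreasing (ε η : ℤ → ZMod 2) (v : ℤ × ℤ)
    (p : (Hitomezashi ε η).Walk v v) (hp : p.IsCycle) (a : ℤ)
    (hmin : ∀ w ∈ p.support, a ≤ w.1)
    (ys : List ℤ)
    (hys : ys = (p.darts.filter (fun d => d.fst.1 = a ∧ d.snd.1 = a)).map (fun d => d.fst.2))
    (hdown : ∀ d ∈ p.darts, d.fst.1 = a → d.snd.1 = a → d.snd.2 = d.fst.2 - 1)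
    (hmax : ∀ y ∈ ys, y ≤ ys.headI) :
    ys.Chain' (· > ·) := by
  classical
  set Dp : List HitoAux.Dt := p.darts.map (fun d => d.toProd) with hDp
  set P' : HitoAux.Dt → Bool := fun d => decide (d.1.1 = a ∧ d.2.1 = a) with hP'
  have hysF : ys = (Dp.filter P').map (·.1.2) := by
    rw [hys, hDp, List.filter_map, List.map_map]
    rfl
  have hchain : HitoAux.IsChainD v Dp v := HitoAux.walk_chainD p
  have hsndnodup : (Dp.map (·.2)).Nodup := by
    rw [hDp, List.map_map]
    rw [show ((·.2 : HitoAux.Dt → ℤ × ℤ) ∘ fun d : (Hitomezashi ε η).Dart => d.toProd)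
      = (fun x : (Hitomezashi ε η).Dart => x.toProd.2) from rfl, p.map_snd_darts]
    exact hp.support_nodup
  have hxc : ∀ d ∈ Dp, a ≤ d.1.1 ∧ a ≤ d.2.1 := by
    intro d hd
    obtain ⟨d0, h0, rfl⟩ := List.mem_map.mp hd
    exact ⟨hmin _ (p.dart_fst_mem_support_of_mem_darts h0),
      hmin _ (p.dart_snd_mem_support_of_mem_darts h0)⟩
  have hunit : ∀ d ∈ Dp, HitoAux.UnitStep d := by
    intro d hd
    obtain ⟨d0, h0, rfl⟩ := List.mem_map.mp hd
    have hadj := d0.adj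
    simp only [Hitomezashi, SimpleGraph.fromRel_adj] at hadj
    obtain ⟨-, hrel⟩ := hadj
    rcases hrel with (⟨h1, -⟩ | ⟨h1, -⟩) | (⟨h1, -⟩ | ⟨h1, -⟩)
    · exact Or.inl h1
    · exact Or.inr (Or.inr (Or.inl h1))
    · refine Or.inr (Or.inl ?_)
      rw [h1]; simp
    · refine Or.inr (Or.inr (Or.inr ?_))
      rw [h1]; simp
  have hdoor : ∀ d ∈ Dp, P' d = true →
      d.1 = (a, d.1.2) ∧ d.2 = (a, d.1.2 - 1) ∧ ((d.1.2 - 1 : ℤ) : ZMod 2) = ε a := by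
    intro d hd hPd
    obtain ⟨d0, h0, rfl⟩ := List.mem_map.mp hd
    rw [hP'] at hPd
    simp only [decide_eq_true_eq] at hPd
    have hdwn := hdown d0 h0 hPd.1 hPd.2
    have h1 : d0.toProd.1 = (a, d0.toProd.1.2) := by rw [← hPd.1]
    have h2 : d0.toProd.2 = (a, d0.toProd.1.2 - 1) := by rw [← hdwn, ← hPd.2]
    refine ⟨h1, h2, ?_⟩
    have hadj := d0.adj
    simp only [Hitomezashi, SimpleGraph.fromRel_adj] at hadj
    obtain ⟨-, hrel⟩ := hadj
    rcases hrel with (⟨h3, -⟩ | ⟨h3, -⟩) | (⟨h3, -⟩ | ⟨h3, h4⟩)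
    · have h5 : d0.toProd.2.1 = d0.toProd.1.1 + 1 := congrArg Prod.fst h3
      omega
    · have h5 : d0.toProd.2.2 = d0.toProd.1.2 + 1 := congrArg Prod.snd h3
      omega
    · have h5 : d0.toProd.1.1 = d0.toProd.2.1 + 1 := congrArg Prod.fst h3
      omega
    · rw [hdwn, hPd.2] at h4
      exact h4
  set F := Dp.filter P' with hFdef
  have hFD : ∀ d ∈ F, d ∈ Dp ∧ P' d = true :=
    fun d hd => ⟨List.mem_of_mem_filter hd, List.of_mem_filter hd⟩
  have hsndpairF : F.Pairwise (fun d e => d.2 ≠ e.2) := by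
    have hsub : (F.map (·.2)).Sublist (Dp.map (·.2)) := (Dp.filter_sublist).map _
    exact List.pairwise_map.mp (hsndnodup.sublist hsub)
  have KEY : ∀ (l1 l2 : List HitoAux.Dt) (dk dk1 dj : HitoAux.Dt),
      F = l1 ++ dk :: dk1 :: l2 → dj ∈ l2 →
      dk1.1.2 < dk.1.2 → dk1.1.2 < dj.1.2 → dj.1.2 < dk.1.2 → False := by
    intro l1 l2 dk dk1 dj hFeq hjmem h1 h2 h3
    obtain ⟨G1, G2, hDp2, hfG2⟩ := HitoAux.filter_split2 P' l1 Dp (dk :: dk1 :: l2)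
      (by rw [← hFdef, hFeq])
    obtain ⟨A, B, rfl, hfB⟩ := HitoAux.filter_split P' G2 dk _ hfG2
    obtain ⟨C, Dd, rfl, hfD⟩ := HitoAux.filter_split P' B dk1 _ hfB
    have hjDd : dj ∈ Dd := List.mem_of_mem_filter (hfD ▸ hjmem)
    obtain ⟨E1, E2, rfl⟩ := List.append_of_mem hjDd
    have hdkF : dk ∈ F := by rw [hFeq]; simp
    have hdk1F : dk1 ∈ F := by rw [hFeq]; simp
    have hdjF : dj ∈ F := by rw [hFeq]; simp [hjmem]
    have hdkP : P' dk = true := List.of_mem_filter hdkF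
    have hdk1P : P' dk1 = true := List.of_mem_filter hdk1F
    have hdjP : P' dj = true := List.of_mem_filter hdjF
    have hDpflat : Dp = (G1 ++ A) ++ dk :: (C ++ dk1 :: (E1 ++ dj :: E2)) := by
      rw [hDp2]; simp
    have hdkDp : dk ∈ Dp := by rw [hDpflat]; simp
    have hdk1Dp : dk1 ∈ Dp := by rw [hDpflat]; simp
    have hdjDp : dj ∈ Dp := by rw [hDpflat]; simp
    obtain ⟨hdk1', hdk2', hdkpar⟩ := hdoor dk hdkDp hdkP
    obtain ⟨hdk11', hdk12', -⟩ := hdoor dk1 hdk1Dp hdk1P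
    obtain ⟨hdj1', -, hdjpar⟩ := hdoor dj hdjDp hdjP
    have hdvd : (2 : ℤ) ∣ dj.1.2 - dk.1.2 := by
      have hcast : ((dk.1.2 - 1 : ℤ) : ZMod 2) = ((dj.1.2 - 1 : ℤ) : ZMod 2) := by
        rw [hdkpar, hdjpar]
      have hmeq := (ZMod.intCast_eq_intCast_iff _ _ _).mp hcast
      have := Int.ModEq.dvd hmeq
      omega
    have hchain' := hchain; rw [hDpflat] at hchain'
    have hsnd' := hsndnodup; rw [hDpflat] at hsnd'
    have hunit' : ∀ d ∈ (G1 ++ A) ++ dk :: (C ++ dk1 :: (E1 ++ dj :: E2)), HitoAux.UnitStep d :=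
      fun d hd => hunit d (by rw [hDpflat]; exact hd)
    have hxc' : ∀ d ∈ (G1 ++ A) ++ dk :: (C ++ dk1 :: (E1 ++ dj :: E2)), a ≤ d.1.1 ∧ a ≤ d.2.1 :=
      fun d hd => hxc d (by rw [hDpflat]; exact hd)
    exact HitoAux.geom a v (G1 ++ A) C E1 E2 dk dk1 dj hchain' hsnd' hunit' hxc'
      dk.1.2 dk1.1.2 dj.1.2 hdk2' hdk11' hdk12' hdj1' h1 h2 (by omega)
  have hNE : ∀ (pre rest : List HitoAux.Dt) (d : HitoAux.Dt), F = pre ++ d :: rest →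
      ∀ e ∈ rest, e.1.2 ≠ d.1.2 := by
    intro pre rest d hFeq e he heq
    have hdF : d ∈ F := by rw [hFeq]; simp
    have heF : e ∈ F := by rw [hFeq]; simp [he]
    obtain ⟨-, hd2, -⟩ := hdoor d (hFD d hdF).1 (hFD d hdF).2
    obtain ⟨-, he2, -⟩ := hdoor e (hFD e heF).1 (hFD e heF).2
    have hsndeq : d.2 = e.2 := by rw [hd2, he2, heq]
    have hpw := hsndpairF
    rw [hFeq] at hpw
    have hpw2 := (List.pairwise_append.mp hpw).2.1
    exact (List.pairwise_cons.mp hpw2).1 e he hsndeq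
  have DEC : ∀ (rest pre : List HitoAux.Dt) (d : HitoAux.Dt), F = pre ++ d :: rest →
      (∀ e ∈ rest, e.1.2 < d.1.2) →
      List.Chain' (fun d e : HitoAux.Dt => d.1.2 > e.1.2) (d :: rest) := by
    intro rest
    induction rest with
    | nil => intro pre d _ _; exact List.isChain_singleton _
    | cons d' rest' ih =>
      intro pre d hFeq hlt
      have h1 : d'.1.2 < d.1.2 := hlt d' (by simp)
      have hFeq' : F = (pre ++ [d]) ++ d' :: rest' := by rw [hFeq]; simp
      have h2 : ∀ e ∈ rest', e.1.2 < d'.1.2 := by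
        intro e he
        have he1 : e.1.2 < d.1.2 := hlt e (by simp [he])
        have hne : e.1.2 ≠ d'.1.2 := hNE (pre ++ [d]) rest' d' hFeq' e he
        rcases lt_or_gt_of_ne hne with h | h
        · exact h
        · exact absurd (KEY pre rest' d d' e hFeq he h1 h he1) not_false
      exact List.isChain_cons_cons.mpr ⟨h1, ih (pre ++ [d]) d' hFeq' h2⟩
  rw [hysF, List.Chain', List.isChain_map]
  rcases hFeq : F with _ | ⟨d, rest⟩
  · simp
  · refine DEC rest [] d (by simp [hFeq]) ?_
    intro e he
    have hyse : e.1.2 ∈ ys := by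
      rw [hysF, hFeq]
      exact List.mem_map_of_mem (by simp [he])
    have hhead : ys.headI = d.1.2 := by rw [hysF, hFeq]; rfl
    have hle := hmax _ hyse
    rw [hhead] at hle
    rcases lt_or_eq_of_le hle with h | h
    · exact h
    · exact absurd h (hNE [] rest d (by simp [hFeq]) e he)
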